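/- Let E ⊂ ℝ^d be compact and convex, let μ be a probability measure on E with finite first moment, and let G : E × E → ℝ be a measurable interaction potential with G(x,y) ≥ ε(G) > 0 for all x,y, and ‖G‖_{Lip,∞} := sup_{y∈E} ‖G(·,y)‖_Lip < ∞. Then for all x, y ∈ E: W₁(Ψ_{G(x,·)}(μ), Ψ_{G(y,·)}(μ)) ≤ (2 ‖G‖_{Lip,∞} diam(E) / ε(G)) · ‖x − y‖₁. -/

import Mathlib

open MeasureTheory Filter
open scoped NNReal ENNReal

noncomputable section

/-- ℓ¹ distance on `ℝ^d`. -/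
def l1dist {d : ℕ} (x y : Fin d → ℝ) : ℝ := ∑ i, |x i - y i|

/-- The set of couplings of two measures. -/
def couplings {α : Type*} [MeasurableSpace α] (μ ν : Measure α) : Set (Measure (α × α)) :=
  {π | IsProbabilityMeasure π ∧ π.map Prod.fst = μ ∧ π.map Prod.snd = ν}

/-- Optimal transport cost with ground cost `c`. -/
def Wcost {α : Type*} [MeasurableSpace α] (c : α → α → ℝ) (μ ν : Measure α) : ℝ :=
  sInf ((fun π : Measure (α × α) => ∫ p, c p.1 p.2 ∂π) '' couplings μ ν)

/-- 1-Wasserstein distance on `ℝ^d` with ℓ¹ ground cost. -/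
def W1 {d : ℕ} (μ ν : Measure (Fin d → ℝ)) : ℝ := Wcost l1dist μ ν

/-- Boltzmann–Gibbs transformation `Ψ_g(ν)(dx) = g(x) ν(dx) / ν(g)`. -/
def BG {d : ℕ} (g : (Fin d → ℝ) → ℝ) (ν : Measure (Fin d → ℝ)) : Measure (Fin d → ℝ) :=
  ν.withDensity (fun x => ENNReal.ofReal (g x / ∫ y, g y ∂ν))

/-- Real-valued Kullback–Leibler divergence `∫ log(dμ/dν) dμ`
(the generalized entropy of the paper is `H_ν(μ) = -KL μ ν`). -/
def KL {α : Type*} [MeasurableSpace α] (μ ν : Measure α) : ℝ :=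
  ∫ x, Real.log ((μ.rnDeriv ν x).toReal) ∂μ

/-- Convolution of two measures on `ℝ^d`. -/
def mconv {d : ℕ} (μ ν : Measure (Fin d → ℝ)) : Measure (Fin d → ℝ) :=
  (μ.prod ν).map (fun p => p.1 + p.2)

/-- Empirical measure of a finite family of points. -/
def empMeasure {d N : ℕ} (x : Fin N → (Fin d → ℝ)) : Measure (Fin d → ℝ) :=
  (N : ℝ≥0∞)⁻¹ • ∑ i, Measure.dirac (x i)

/-- Auxiliary: ℓ¹ distance is nonnegative. -/
lemma l1dist_nonneg' {d : ℕ} (x y : Fin d → ℝ) : 0 ≤ l1dist x y :=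
  Finset.sum_nonneg fun _ _ => abs_nonneg _

lemma l1dist_self' {d : ℕ} (x : Fin d → ℝ) : l1dist x x = 0 := by simp [l1dist]

lemma l1dist_comm' {d : ℕ} (x y : Fin d → ℝ) : l1dist x y = l1dist y x := by
  simp only [l1dist]; exact Finset.sum_congr rfl fun i _ => abs_sub_comm _ _

lemma l1dist_continuous' {d : ℕ} :
    Continuous (fun p : (Fin d → ℝ) × (Fin d → ℝ) => l1dist p.1 p.2) := by
  unfold l1dist
  exact continuous_finset_sum _ fun i _ => (((continuous_apply i).comp continuous_fst).sub
    ((continuous_apply i).comp continuous_snd)).abs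

lemma W1_le_of_coupling {d : ℕ} (μ ν : Measure (Fin d → ℝ))
    (π : Measure ((Fin d → ℝ) × (Fin d → ℝ))) (hπ : π ∈ couplings μ ν) {B : ℝ}
    (hB : ∫ p, l1dist p.1 p.2 ∂π ≤ B) : W1 μ ν ≤ B := by
  refine le_trans (csInf_le ⟨0, ?_⟩ ⟨π, hπ, rfl⟩) hB
  rintro r ⟨π', -, rfl⟩
  exact integral_nonneg fun p => l1dist_nonneg' _ _

/-- contraction estimate for the Boltzmann–Gibbs transformation in the point
variable: `W₁(Ψ_{G(x,·)}(μ), Ψ_{G(y,·)}(μ)) ≤ (2 ‖G‖_{Lip,∞} diam(E) / ε(G)) ‖x−y‖₁`.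
Here `CG` is the constant `‖G‖_{Lip,∞}` and `D` the ℓ¹-diameter of `E`. -/
theorem statement4 {d : ℕ} (E : Set (Fin d → ℝ)) (hEc : IsCompact E) (hEconv : Convex ℝ E)
    (μ : Measure (Fin d → ℝ)) [IsProbabilityMeasure μ] (hμE : μ E = 1)
    (hμ1 : Integrable (fun x : Fin d → ℝ => x) μ)
    (G : (Fin d → ℝ) → (Fin d → ℝ) → ℝ) (hGmeas : Measurable (Function.uncurry G))
    (hGbdd : ∃ C, ∀ x ∈ E, ∀ y ∈ E, G x y ≤ C)
    (ε : ℝ) (hε : 0 < ε) (hGlb : ∀ x ∈ E, ∀ y ∈ E, ε ≤ G x y)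
    (CG : ℝ) (hGLip : ∀ y ∈ E, ∀ x ∈ E, ∀ x' ∈ E, |G x y - G x' y| ≤ CG * l1dist x x')
    (D : ℝ) (hD : ∀ x ∈ E, ∀ y ∈ E, l1dist x y ≤ D)
    (x y : Fin d → ℝ) (hx : x ∈ E) (hy : y ∈ E) :
    W1 (BG (G x) μ) (BG (G y) μ) ≤ 2 * CG * D / ε * l1dist x y := by
    classical
  have hL0 : 0 ≤ l1dist x y := l1dist_nonneg' x y
  set L := l1dist x y with hL
  have hCGL : 0 ≤ CG * L := le_trans (abs_nonneg _) (hGLip x hx x hx y hy)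
  have hD0 : 0 ≤ D := by simpa [l1dist_self'] using hD x hx x hx
  have hEmeas : MeasurableSet E := hEc.isClosed.measurableSet
  have hEc0 : μ Eᶜ = 0 := by
    have h := measure_compl hEmeas (measure_ne_top μ E)
    rw [hμE, measure_univ] at h; simpa using h
  have hE_ae : ∀ᵐ u ∂μ, u ∈ E := by
    rw [ae_iff]; exact hEc0
  obtain ⟨C, hC⟩ := hGbdd
  have hGxm : Measurable (G x) := hGmeas.comp (measurable_const.prodMk measurable_id)
  have hGym : Measurable (G y) := hGmeas.comp (measurable_const.prodMk measurable_id)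
  have hGx_int : Integrable (G x) μ := by
    refine Integrable.mono' (integrable_const |C|) hGxm.aestronglyMeasurable ?_
    filter_upwards [hE_ae] with u hu
    rw [Real.norm_eq_abs, abs_of_nonneg (le_trans hε.le (hGlb x hx u hu))]
    exact (hC x hx u hu).trans (le_abs_self C)
  have hGy_int : Integrable (G y) μ := by
    refine Integrable.mono' (integrable_const |C|) hGym.aestronglyMeasurable ?_
    filter_upwards [hE_ae] with u hu
    rw [Real.norm_eq_abs, abs_of_nonneg (le_trans hε.le (hGlb y hy u hu))]
    exact (hC y hy u hu).trans (le_abs_self C)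
  set a := ∫ u, G x u ∂μ with ha_def
  set b := ∫ u, G y u ∂μ with hb_def
  have ha : ε ≤ a := by
    have h : ∫ (_ : Fin d → ℝ), ε ∂μ ≤ a := by
      refine integral_mono_ae (integrable_const ε) hGx_int ?_
      filter_upwards [hE_ae] with u hu using hGlb x hx u hu
    simpa using h
  have hb : ε ≤ b := by
    have h : ∫ (_ : Fin d → ℝ), ε ∂μ ≤ b := by
      refine integral_mono_ae (integrable_const ε) hGy_int ?_
      filter_upwards [hE_ae] with u hu using hGlb y hy u hu
    simpa using h
  have ha0 : 0 < a := lt_of_lt_of_le hε ha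
  have hb0 : 0 < b := lt_of_lt_of_le hε hb
  have hba : |b - a| ≤ CG * L := by
    rw [ha_def, hb_def, ← integral_sub hGy_int hGx_int]
    calc |∫ u, (G y u - G x u) ∂μ| ≤ ∫ u, |G y u - G x u| ∂μ := by
          simpa [Real.norm_eq_abs] using
            norm_integral_le_integral_norm (μ := μ) (fun u => G y u - G x u)
      _ ≤ ∫ (_ : Fin d → ℝ), CG * L ∂μ := by
          refine integral_mono_ae (hGy_int.sub hGx_int).abs (integrable_const _) ?_
          filter_upwards [hE_ae] with u hu
          simpa [l1dist_comm' y x] using hGLip u hu y hy x hx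
      _ = CG * L := by simp
  set f : (Fin d → ℝ) → ℝ := fun u => G x u / a with hf_def
  set g : (Fin d → ℝ) → ℝ := fun u => G y u / b with hg_def
  have hfm : Measurable f := hGxm.div_const a
  have hgm : Measurable g := hGym.div_const b
  have hf_int : Integrable f μ := hGx_int.div_const a
  have hg_int : Integrable g μ := hGy_int.div_const b
  have hf_ae : ∀ᵐ u ∂μ, 0 ≤ f u := by
    filter_upwards [hE_ae] with u hu
    exact div_nonneg (le_trans hε.le (hGlb x hx u hu)) ha0.le
  have hg_ae : ∀ᵐ u ∂μ, 0 ≤ g u := by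
    filter_upwards [hE_ae] with u hu
    exact div_nonneg (le_trans hε.le (hGlb y hy u hu)) hb0.le
  have hf1 : ∫ u, f u ∂μ = 1 := by
    rw [hf_def]; rw [integral_div, ← ha_def, div_self ha0.ne']
  have hg1 : ∫ u, g u ∂μ = 1 := by
    rw [hg_def]; rw [integral_div, ← hb_def, div_self hb0.ne']
  set m : (Fin d → ℝ) → ℝ := fun u => min (f u) (g u) with hm_def
  have hmm : Measurable m := hfm.min hgm
  have hmf : ∀ u, m u ≤ f u := fun u => min_le_left _ _
  have hmg : ∀ u, m u ≤ g u := fun u => min_le_right _ _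
  have hm_int : Integrable m μ := by
    refine Integrable.mono' (hf_int.abs.add hg_int.abs) hmm.aestronglyMeasurable ?_
    refine Filter.Eventually.of_forall fun u => ?_
    rw [Real.norm_eq_abs]
    rcases le_total (f u) (g u) with h | h
    · rw [hm_def]; simp only [min_eq_left h, Pi.add_apply]; linarith [abs_nonneg (g u)]
    · rw [hm_def]; simp only [min_eq_right h, Pi.add_apply]; linarith [abs_nonneg (f u)]
  have hm_ae : ∀ᵐ u ∂μ, 0 ≤ m u := by
    filter_upwards [hf_ae, hg_ae] with u h1 h2 using le_min h1 h2
  set s := ∫ u, (f u - m u) ∂μ with hs_def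
  have hfm_int : Integrable (fun u => f u - m u) μ := hf_int.sub hm_int
  have hgm_int : Integrable (fun u => g u - m u) μ := hg_int.sub hm_int
  have hs0 : 0 ≤ s := integral_nonneg fun u => sub_nonneg.2 (hmf u)
  have hs' : ∫ u, (g u - m u) ∂μ = s := by
    rw [hs_def, integral_sub hg_int hm_int, integral_sub hf_int hm_int, hf1, hg1]
  have hsB : s ≤ 2 * (CG * L / ε) := by
    have hpt : ∀ᵐ u ∂μ, f u - m u ≤ CG * L / ε + g u * (CG * L / ε) := by
      filter_upwards [hE_ae, hg_ae] with u hu hgu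
      have h1 : f u - m u ≤ |f u - g u| := by
        rcases le_total (f u) (g u) with h | h
        · rw [hm_def]; simp only [min_eq_left h]; simp [abs_nonneg]
        · rw [hm_def]; simp only [min_eq_right h]; exact le_abs_self _
      have hkey : f u - g u = (G x u - G y u) / a + g u * ((b - a) / a) := by
        rw [hf_def, hg_def]
        field_simp
        ring
      have h2 : |f u - g u| ≤ |G x u - G y u| / a + g u * (|b - a| / a) := by
        rw [hkey]
        refine (abs_add_le _ _).trans ?_
        rw [abs_div, abs_of_nonneg ha0.le, abs_mul, abs_of_nonneg hgu, abs_div,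
          abs_of_nonneg ha0.le]
      have h3 : |G x u - G y u| / a ≤ CG * L / ε :=
        div_le_div₀ hCGL (hGLip u hu x hx y hy) hε ha
      have h4 : g u * (|b - a| / a) ≤ g u * (CG * L / ε) :=
        mul_le_mul_of_nonneg_left (div_le_div₀ hCGL hba hε ha) hgu
      linarith
    calc s ≤ ∫ u, (CG * L / ε + g u * (CG * L / ε)) ∂μ :=
          integral_mono_ae hfm_int ((integrable_const _).add (hg_int.mul_const _)) hpt
      _ = CG * L / ε + (∫ u, g u ∂μ) * (CG * L / ε) := by
          rw [integral_add (integrable_const _) (hg_int.mul_const _), integral_const,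
            integral_mul_const]
          simp
      _ = 2 * (CG * L / ε) := by rw [hg1]; ring
  set M : (Fin d → ℝ) → ℝ≥0∞ := fun u => ENNReal.ofReal (m u) with hM_def
  set Fd : (Fin d → ℝ) → ℝ≥0∞ := fun u => ENNReal.ofReal (f u - m u) with hFd_def
  set Gd : (Fin d → ℝ) → ℝ≥0∞ := fun u => ENNReal.ofReal (g u - m u) with hGd_def
  set μM := μ.withDensity M with hμM_def
  set P := μ.withDensity Fd with hP_def
  set Q := μ.withDensity Gd with hQ_def
  have hBGx : BG (G x) μ = μ.withDensity (fun u => ENNReal.ofReal (f u)) := rfl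
  have hBGy : BG (G y) μ = μ.withDensity (fun u => ENNReal.ofReal (g u)) := rfl
  have hsplitx : μM + P = μ.withDensity (fun u => ENNReal.ofReal (f u)) := by
    rw [hμM_def, hP_def, ← withDensity_add_left hmm.ennreal_ofReal]
    refine withDensity_congr_ae ?_
    filter_upwards [hm_ae] with u hu
    simp only [Pi.add_apply, hM_def, hFd_def]
    rw [← ENNReal.ofReal_add hu (sub_nonneg.2 (hmf u))]
    ring_nf
  have hsplity : μM + Q = μ.withDensity (fun u => ENNReal.ofReal (g u)) := by
    rw [hμM_def, hQ_def, ← withDensity_add_left hmm.ennreal_ofReal]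
    refine withDensity_congr_ae ?_
    filter_upwards [hm_ae] with u hu
    simp only [Pi.add_apply, hM_def, hGd_def]
    rw [← ENNReal.ofReal_add hu (sub_nonneg.2 (hmg u))]
    ring_nf
  have hP_univ : P Set.univ = ENNReal.ofReal s := by
    rw [hP_def, withDensity_apply _ MeasurableSet.univ, setLIntegral_univ, hFd_def,
      ← ofReal_integral_eq_lintegral_ofReal hfm_int
        (Filter.Eventually.of_forall fun u => sub_nonneg.2 (hmf u))]
  have hQ_univ : Q Set.univ = ENNReal.ofReal s := by
    rw [hQ_def, withDensity_apply _ MeasurableSet.univ, setLIntegral_univ, hGd_def,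
      ← ofReal_integral_eq_lintegral_ofReal hgm_int
        (Filter.Eventually.of_forall fun u => sub_nonneg.2 (hmg u)), hs']
  haveI hfinP : IsFiniteMeasure P := ⟨by rw [hP_univ]; exact ENNReal.ofReal_lt_top⟩
  haveI hfinQ : IsFiniteMeasure Q := ⟨by rw [hQ_univ]; exact ENNReal.ofReal_lt_top⟩
  have hμ1_univ : (μ.withDensity (fun u => ENNReal.ofReal (f u))) Set.univ = 1 := by
    rw [withDensity_apply _ MeasurableSet.univ, setLIntegral_univ,
      ← ofReal_integral_eq_lintegral_ofReal hf_int hf_ae, hf1, ENNReal.ofReal_one]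
  haveI hprob1 : IsProbabilityMeasure (BG (G x) μ) := ⟨by rw [hBGx]; exact hμ1_univ⟩
  have hdiag : Measurable (fun u : Fin d → ℝ => (u, u)) :=
    measurable_id.prodMk measurable_id
  have hc_cont : Continuous (fun p : (Fin d → ℝ) × (Fin d → ℝ) => l1dist p.1 p.2) :=
    l1dist_continuous'
  have hRHS : (0:ℝ) ≤ 2 * CG * D / ε * L := by
    have h : 2 * CG * D / ε * L = 2 * ((CG * L) * D) / ε := by ring
    rw [h]
    exact div_nonneg (by nlinarith [mul_nonneg hCGL hD0]) hε.le
  by_cases hs_eq : s = 0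
  · have hf_eq_m : f =ᵐ[μ] m := by
      have h := (integral_eq_zero_iff_of_nonneg_ae
        (Filter.Eventually.of_forall fun u => sub_nonneg.2 (hmf u)) hfm_int).1 (hs_def ▸ hs_eq)
      filter_upwards [h] with u hu
      have : f u - m u = 0 := hu
      linarith
    have hg_eq_m : g =ᵐ[μ] m := by
      have h := (integral_eq_zero_iff_of_nonneg_ae
        (Filter.Eventually.of_forall fun u => sub_nonneg.2 (hmg u)) hgm_int).1
        (hs'.trans hs_eq)
      filter_upwards [h] with u hu
      have : g u - m u = 0 := hu
      linarith
    have hBG_eq : BG (G x) μ = BG (G y) μ := by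
      rw [hBGx, hBGy]
      refine withDensity_congr_ae ?_
      filter_upwards [hf_eq_m, hg_eq_m] with u h1 h2
      rw [h1, h2]
    set π := (BG (G x) μ).map (fun u => (u, u)) with hπ_def
    have hmem : π ∈ couplings (BG (G x) μ) (BG (G y) μ) := by
      refine ⟨Measure.isProbabilityMeasure_map hdiag.aemeasurable, ?_, ?_⟩
      · rw [hπ_def, Measure.map_map measurable_fst hdiag]
        exact Measure.map_id
      · rw [hπ_def, Measure.map_map measurable_snd hdiag, ← hBG_eq]
        exact Measure.map_id
    refine W1_le_of_coupling _ _ π hmem ?_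
    have hzero : ∫ p, l1dist p.1 p.2 ∂π = 0 := by
      rw [hπ_def, integral_map hdiag.aemeasurable hc_cont.aestronglyMeasurable]
      simp [l1dist_self']
    rw [hzero]
    exact hRHS
  have hs_pos : 0 < s := lt_of_le_of_ne hs0 (Ne.symm hs_eq)
    have hσ0 : ENNReal.ofReal s ≠ 0 := by
      simp only [ne_eq, ENNReal.ofReal_eq_zero, not_le]
      exact hs_pos
    set π := μM.map (fun u : Fin d → ℝ => (u, u)) + (ENNReal.ofReal s)⁻¹ • (P.prod Q)
      with hπ_def
    have hfst : π.map Prod.fst = BG (G x) μ := by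
      rw [hπ_def, Measure.map_add _ _ measurable_fst, Measure.map_map measurable_fst hdiag,
        Measure.map_smul, Measure.map_fst_prod, hQ_univ, smul_smul,
        ENNReal.inv_mul_cancel hσ0 ENNReal.ofReal_ne_top, one_smul]
      rw [show (Prod.fst ∘ fun u : Fin d → ℝ => (u, u)) = id from rfl, Measure.map_id,
        hBGx, ← hsplitx]
    have hsnd : π.map Prod.snd = BG (G y) μ := by
      rw [hπ_def, Measure.map_add _ _ measurable_snd, Measure.map_map measurable_snd hdiag,
        Measure.map_smul, Measure.map_snd_prod, hP_univ, smul_smul,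
        ENNReal.inv_mul_cancel hσ0 ENNReal.ofReal_ne_top, one_smul]
      rw [show (Prod.snd ∘ fun u : Fin d → ℝ => (u, u)) = id from rfl, Measure.map_id,
        hBGy, ← hsplity]
    have hprobπ : IsProbabilityMeasure π := by
      constructor
      have h : π Set.univ = (π.map Prod.fst) Set.univ := by
        rw [Measure.map_apply measurable_fst MeasurableSet.univ, Set.preimage_univ]
      rw [h, hfst, hBGx, hμ1_univ]
    -- integrability over the diagonal part
    have hint1 : Integrable (fun p : (Fin d → ℝ) × (Fin d → ℝ) => l1dist p.1 p.2)
        (μM.map (fun u : Fin d → ℝ => (u, u))) := by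
      rw [integrable_map_measure hc_cont.aestronglyMeasurable hdiag.aemeasurable]
      have h : ((fun p : (Fin d → ℝ) × (Fin d → ℝ) => l1dist p.1 p.2) ∘
          fun u : Fin d → ℝ => (u, u)) = fun _ => (0:ℝ) := funext fun u => l1dist_self' u
      rw [h]
      exact integrable_zero _ _ _
    have hzero1 : ∫ p, l1dist p.1 p.2 ∂(μM.map (fun u : Fin d → ℝ => (u, u))) = 0 := by
      rw [integral_map hdiag.aemeasurable hc_cont.aestronglyMeasurable]
      simp [l1dist_self']
    -- the product part lives on E ×ˢ E
    have hPQ_E : (P.prod Q) ((E ×ˢ E)ᶜ) = 0 := by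
      have h1 : P Eᶜ = 0 := (withDensity_absolutelyContinuous μ _) hEc0
      have h2 : Q Eᶜ = 0 := (withDensity_absolutelyContinuous μ _) hEc0
      rw [Set.compl_prod_eq_union]
      refine measure_union_null ?_ ?_
      · rw [Measure.prod_prod, h1, zero_mul]
      · rw [Measure.prod_prod, h2, mul_zero]
    have hae_cost : ∀ᵐ p ∂(P.prod Q), l1dist p.1 p.2 ≤ D := by
      have hmem : ∀ᵐ p ∂(P.prod Q), p ∈ E ×ˢ E := by
        rw [ae_iff]
        convert hPQ_E using 2
        rfl
      filter_upwards [hmem] with p hp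
      exact hD p.1 hp.1 p.2 hp.2
    have hint2 : Integrable (fun p : (Fin d → ℝ) × (Fin d → ℝ) => l1dist p.1 p.2)
        (P.prod Q) := by
      refine Integrable.mono' (integrable_const D) hc_cont.aestronglyMeasurable ?_
      filter_upwards [hae_cost] with p hp
      rw [Real.norm_eq_abs, abs_of_nonneg (l1dist_nonneg' _ _)]
      exact hp
    have hPQ_univ : (P.prod Q) Set.univ = ENNReal.ofReal s * ENNReal.ofReal s := by
      rw [← Set.univ_prod_univ, Measure.prod_prod, hP_univ, hQ_univ]
    have hcost2 : ∫ p, l1dist p.1 p.2 ∂(P.prod Q) ≤ D * (s * s) := by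
      calc ∫ p, l1dist p.1 p.2 ∂(P.prod Q) ≤ ∫ _, D ∂(P.prod Q) :=
            integral_mono_ae hint2 (integrable_const D) hae_cost
        _ = ((P.prod Q) Set.univ).toReal * D := by rw [integral_const]; rfl
        _ = D * (s * s) := by
            rw [hPQ_univ, ENNReal.toReal_mul, ENNReal.toReal_ofReal hs0]
            ring
    have hint2' : Integrable (fun p : (Fin d → ℝ) × (Fin d → ℝ) => l1dist p.1 p.2)
        ((ENNReal.ofReal s)⁻¹ • (P.prod Q)) :=
      hint2.smul_measure (ENNReal.inv_ne_top.2 hσ0)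
    have hcost_pos2 : (0:ℝ) ≤ ∫ p, l1dist p.1 p.2 ∂(P.prod Q) :=
      integral_nonneg fun p => l1dist_nonneg' _ _
    refine W1_le_of_coupling _ _ π ⟨hprobπ, hfst, hsnd⟩ ?_
    calc ∫ p, l1dist p.1 p.2 ∂π
        = ∫ p, l1dist p.1 p.2 ∂(μM.map (fun u : Fin d → ℝ => (u, u)))
          + ∫ p, l1dist p.1 p.2 ∂((ENNReal.ofReal s)⁻¹ • (P.prod Q)) := by
          rw [hπ_def, integral_add_measure hint1 hint2']
      _ = s⁻¹ * ∫ p, l1dist p.1 p.2 ∂(P.prod Q) := by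
          rw [hzero1, integral_smul_measure, ENNReal.toReal_inv,
            ENNReal.toReal_ofReal hs0, zero_add, smul_eq_mul]
      _ ≤ s⁻¹ * (D * (s * s)) :=
          mul_le_mul_of_nonneg_left hcost2 (inv_nonneg.2 hs0)
      _ = D * s := by field_simp
      _ ≤ D * (2 * (CG * L / ε)) := mul_le_mul_of_nonneg_left hsB hD0
      _ = 2 * CG * D / ε * L := by ring
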